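/- arXiv:2211.10742 — 3 statements merged into one kernel-verified Lean document; each statement's English description precedes it below -/
import Mathlib

section
/- Let X ⊆ ℝ^{d_X} and Y ⊆ ℝ^{d_Y} be compact Borel sets, μ ∈ P(X), ν ∈ P(Y), let p ∈ ℕ be even, and let c_X : X × X → ℝ and c_Y : Y × Y → ℝ be polynomials. Then the Gromov-Wasserstein problem GW_p^p(c_X, c_Y, μ, ν) = inf_{π ∈ Π(X×Y; μ,ν)} ∬ (c_X(x,x') − c_Y(y,y'))^p dπ(x,y) dπ(x',y') equals the generalized moment problem inf_{y ∈ Π_mom} L^{GW_p}(y), where Π_mom is the set of sequences y ∈ ℝ^{ℕ^{d_X + d_Y}} admitting a representing finite positive Borel measure π on X × Y with marginal moment constraints y_{(α,0)} = m_α(μ) and y_{(0,β)} = m_β(ν) for all α ∈ ℕ^{d_X}, β ∈ ℕ^{d_Y}, and L^{GW_p}(y) = Σ_k a_k y_{γ^L_k} y_{γ^R_k} is the quadratic functional obtained by expanding (c_X(x,x') − c_Y(y,y'))^p = Σ_k a_k z^{γ_k} as a polynomial in z = (x,y,x',y') and splitting each exponent γ_k = (γ^L_k, γ^R_k), so that L^{GW_p}(m(π))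 equals the double integral for every probability measure π on X × Y. -/
open MeasureTheory

namespace Stmt12

variable {dX dY : ℕ}

/-- The monomial `x^α y^β` on `ℝ^{d_X} × ℝ^{d_Y}`. -/
def mon2 (α : (Fin dX → ℕ) × (Fin dY → ℕ)) (z : (Fin dX → ℝ) × (Fin dY → ℝ)) : ℝ :=
  (∏ i, z.1 i ^ α.1 i) * ∏ j, z.2 j ^ α.2 j

/-- Couplings `Π(X×Y; μ, ν)`. -/
def CouplingsXY (X : Set (Fin dX → ℝ)) (Y : Set (Fin dY → ℝ))
    (μ : Measure (Fin dX → ℝ)) (ν : Measure (Fin dY → ℝ)) :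
    Set (Measure ((Fin dX → ℝ) × (Fin dY → ℝ))) :=
  {π | IsProbabilityMeasure π ∧ π (X ×ˢ Y)ᶜ = 0 ∧
    π.map Prod.fst = μ ∧ π.map Prod.snd = ν}

/-- `Π_mom`: sequences `y ∈ ℝ^{ℕ^{d_X+d_Y}}` admitting a representing finite positive Borel
measure on `X × Y` and satisfying the marginal moment constraints `y_{(α,0)} = m_α(μ)` and
`y_{(0,β)} = m_β(ν)`. -/
def GWMomCouplings (X : Set (Fin dX → ℝ)) (Y : Set (Fin dY → ℝ))
    (μ : Measure (Fin dX → ℝ)) (ν : Measure (Fin dY → ℝ)) :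
    Set (((Fin dX → ℕ) × (Fin dY → ℕ)) → ℝ) :=
  {y | (∃ π : Measure ((Fin dX → ℝ) × (Fin dY → ℝ)), IsFiniteMeasure π ∧
      π (X ×ˢ Y)ᶜ = 0 ∧ ∀ α, y α = ∫ z, mon2 α z ∂π) ∧
    (∀ α : Fin dX → ℕ, y (α, fun _ => 0) = ∫ x, ∏ i, x i ^ α i ∂μ) ∧
    (∀ β : Fin dY → ℕ, y ((fun _ => 0), β) = ∫ x, ∏ j, x j ^ β j ∂ν)}

/-- The quadratic functional `L^{GW_p}(y) = Σ_k a_k y_{γ^L_k} y_{γ^R_k}` built from the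
coefficients `a` of the expansion of `(c_X − c_Y)^p`. -/
noncomputable def LGW
    (a : (((Fin dX → ℕ) × (Fin dY → ℕ)) × ((Fin dX → ℕ) × (Fin dY → ℕ))) →₀ ℝ)
    (y : ((Fin dX → ℕ) × (Fin dY → ℕ)) → ℝ) : ℝ :=
  a.sum fun γ c => c * y γ.1 * y γ.2


section Helpers

/-- Integrability of a continuous function w.r.t. a finite measure vanishing outside a compact. -/
lemma integrable_of_null_compl {E : Type*} [MeasurableSpace E] [TopologicalSpace E]
    [OpensMeasurableSpace E] (π : Measure E) [IsFiniteMeasure π] {K : Set E}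
    (hK : IsCompact K) (hπ : π Kᶜ = 0) {g : E → ℝ} (hg : Continuous g) :
    Integrable g π := by
  obtain ⟨C, hC⟩ := hK.exists_bound_of_continuousOn hg.continuousOn
  refine (integrable_const C).mono' hg.aestronglyMeasurable ?_
  rw [Filter.eventually_iff, mem_ae_iff]
  refine measure_mono_null (fun x hx => ?_) hπ
  simp only [Set.mem_compl_iff, Set.mem_setOf_eq] at hx ⊢
  exact fun hxK => hx (hC x hxK)

variable {d : ℕ}

lemma integral_eval_eq {κ μ : Measure (Fin d → ℝ)} [IsFiniteMeasure κ] [IsFiniteMeasure μ]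
    {S : Set (Fin d → ℝ)} (hS : IsCompact S) (hκ : κ Sᶜ = 0) (hμ : μ Sᶜ = 0)
    (hmom : ∀ α : Fin d → ℕ, ∫ x, ∏ i, x i ^ α i ∂κ = ∫ x, ∏ i, x i ^ α i ∂μ)
    (q : MvPolynomial (Fin d) ℝ) :
    ∫ x, MvPolynomial.eval x q ∂κ = ∫ x, MvPolynomial.eval x q ∂μ := by
  have hcont : ∀ γ : Fin d →₀ ℕ, Continuous fun x : Fin d → ℝ =>
      MvPolynomial.coeff γ q * ∏ i, x i ^ γ i := by
    intro γ
    exact continuous_const.mul (continuous_finset_prod _ fun i _ =>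
      (continuous_apply i).pow _)
  have key : ∀ (ρ : Measure (Fin d → ℝ)) (_ : IsFiniteMeasure ρ) (_ : ρ Sᶜ = 0),
      ∫ x, MvPolynomial.eval x q ∂ρ =
        ∑ γ ∈ q.support, MvPolynomial.coeff γ q * ∫ x, ∏ i, x i ^ γ i ∂ρ := by
    intro ρ hρfin hρ
    simp_rw [MvPolynomial.eval_eq']
    rw [integral_finset_sum _ fun γ _ => integrable_of_null_compl ρ hS hρ (hcont γ)]
    exact Finset.sum_congr rfl fun γ _ => integral_const_mul _ _
  rw [key κ ‹_› hκ, key μ ‹_› hμ]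
  exact Finset.sum_congr rfl fun γ _ => by rw [hmom fun i => γ i]

/-- Moment determinacy on a compact set. -/
lemma meas_eq_of_moments_eq {κ μ : Measure (Fin d → ℝ)} [IsFiniteMeasure κ] [IsFiniteMeasure μ]
    {S : Set (Fin d → ℝ)} (hS : IsCompact S) (hκ : κ Sᶜ = 0) (hμ : μ Sᶜ = 0)
    (hmom : ∀ α : Fin d → ℕ, ∫ x, ∏ i, x i ^ α i ∂κ = ∫ x, ∏ i, x i ^ α i ∂μ) :
    κ = μ := by
  haveI : CompactSpace S := isCompact_iff_compactSpace.mp hS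
  set coord : Fin d → C(S, ℝ) := fun i =>
    ⟨fun x => (x : Fin d → ℝ) i, (continuous_apply i).comp continuous_subtype_val⟩ with hcoord
  set A : Subalgebra ℝ C(S, ℝ) := (MvPolynomial.aeval coord).range with hA
  have heval : ∀ (q : MvPolynomial (Fin d) ℝ) (z : S),
      (MvPolynomial.aeval coord q) z = MvPolynomial.eval (z : Fin d → ℝ) q := by
    intro q z
    induction q using MvPolynomial.induction_on with
    | C c => simp [hcoord]
    | add p q hp hq => simp [hp, hq]
    | mul_X p i hp => simp only [hcoord] at hp ⊢; simp [hp]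
  have hsep : A.SeparatesPoints := by
    intro x y hxy
    have : (x : Fin d → ℝ) ≠ (y : Fin d → ℝ) := fun h => hxy (Subtype.ext h)
    obtain ⟨i, hi⟩ := Function.ne_iff.mp this
    exact ⟨coord i, ⟨_, ⟨MvPolynomial.X i, by simp⟩, rfl⟩, hi⟩
  -- real integrals of all (bounded) continuous functions agree
  have hreal : ∀ F : (Fin d → ℝ) → ℝ, Continuous F → ∫ x, F x ∂κ = ∫ x, F x ∂μ := by
    intro F hF
    set D := ∫ x, F x ∂κ - ∫ x, F x ∂μ with hD
    set C := (κ Set.univ).toReal + (μ Set.univ).toReal with hCdef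
    have hC0 : 0 ≤ C := by positivity
    have key : ∀ ε : ℝ, 0 < ε → |D| ≤ ε * C := by
      intro ε hε
      obtain ⟨g, hg⟩ := ContinuousMap.exists_mem_subalgebra_near_continuous_of_separatesPoints
        A hsep (fun z : S => F z) (hF.comp continuous_subtype_val) ε hε
      obtain ⟨q, hq⟩ := g.2
      set P : (Fin d → ℝ) → ℝ := fun x => MvPolynomial.eval x q with hP
      have hPc : Continuous P := by
        simp only [hP]
        exact continuous_finset_sum _ fun γ _ => by
          simp only [RingHom.id_apply, Finsupp.prod]
          exact (continuous_const.mul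
            (continuous_finset_prod _ fun i _ => (continuous_apply i).pow (γ i)))
      have hbound : ∀ (ρ : Measure (Fin d → ℝ)) (_ : IsFiniteMeasure ρ) (_ : ρ Sᶜ = 0),
          |∫ x, F x ∂ρ - ∫ x, P x ∂ρ| ≤ ε * (ρ Set.univ).toReal := by
        intro ρ hρfin hρ
        have hFi := integrable_of_null_compl ρ hS hρ hF
        have hPi := integrable_of_null_compl ρ hS hρ hPc
        rw [← integral_sub hFi hPi]
        have h1 : |∫ x, (F x - P x) ∂ρ| ≤ ∫ x, |F x - P x| ∂ρ := by
          simpa [Real.norm_eq_abs] using norm_integral_le_integral_norm (fun x => F x - P x) (μ := ρ)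
        have h2 : ∫ x, |F x - P x| ∂ρ ≤ ∫ _x, ε ∂ρ := by
          refine integral_mono_ae (hFi.sub hPi).abs (integrable_const ε) ?_
          rw [Filter.EventuallyLE, Filter.eventually_iff, mem_ae_iff]
          refine measure_mono_null (fun x hx => ?_) hρ
          simp only [Set.mem_compl_iff, Set.mem_setOf_eq] at hx ⊢
          intro hxS
          apply hx
          have hgz := hg ⟨x, hxS⟩
          have hq' : (MvPolynomial.aeval coord) q = (g : C(S, ℝ)) := hq
          have hPx : P x = (g : C(S, ℝ)) ⟨x, hxS⟩ :=
            (heval q ⟨x, hxS⟩).symm.trans (congrFun (congrArg _ hq') _)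
          rw [Real.norm_eq_abs] at hgz
          rw [hPx]
          calc |F x - (g : C(S, ℝ)) ⟨x, hxS⟩| = |(g : C(S, ℝ)) ⟨x, hxS⟩ - F x| := abs_sub_comm _ _
            _ ≤ ε := le_of_lt hgz
        calc |∫ x, (F x - P x) ∂ρ| ≤ ∫ _x, ε ∂ρ := le_trans h1 h2
          _ = ε * (ρ Set.univ).toReal := by
            rw [integral_const, smul_eq_mul, mul_comm]
            rfl
      have hPP : ∫ x, P x ∂κ = ∫ x, P x ∂μ := integral_eval_eq hS hκ hμ hmom q
      have e1 := hbound κ ‹_› hκ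
      have e2 := hbound μ ‹_› hμ
      have hDe : D = (∫ x, F x ∂κ - ∫ x, P x ∂κ) - (∫ x, F x ∂μ - ∫ x, P x ∂μ) := by
        rw [hD, hPP]; ring
      calc |D| = |(∫ x, F x ∂κ - ∫ x, P x ∂κ) - (∫ x, F x ∂μ - ∫ x, P x ∂μ)| := by rw [hDe]
        _ ≤ |∫ x, F x ∂κ - ∫ x, P x ∂κ| + |∫ x, F x ∂μ - ∫ x, P x ∂μ| := abs_sub _ _
        _ ≤ ε * (κ Set.univ).toReal + ε * (μ Set.univ).toReal := add_le_add e1 e2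
        _ = ε * C := by rw [hCdef]; ring
    by_contra hne
    have h1 : 0 < |D| := abs_pos.mpr (sub_ne_zero.mpr hne)
    have h2 := key (|D| / (2 * (C + 1))) (by positivity)
    have h3 : |D| / (2 * (C + 1)) * C < |D| := by
      rw [div_mul_eq_mul_div, div_lt_iff₀ (by positivity)]
      nlinarith
    linarith
  refine ext_of_forall_lintegral_eq_of_IsFiniteMeasure fun f => ?_
  have hFc : Continuous fun x => (f x : ℝ) := NNReal.continuous_coe.comp f.continuous
  have hiκ : Integrable (fun x => (f x : ℝ)) κ :=
    integrable_of_null_compl κ hS hκ hFc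
  have hiμ : Integrable (fun x => (f x : ℝ)) μ :=
    integrable_of_null_compl μ hS hμ hFc
  rw [lintegral_coe_eq_integral _ hiκ, lintegral_coe_eq_integral _ hiμ,
    hreal _ hFc]

lemma continuous_mon2 (α : (Fin dX → ℕ) × (Fin dY → ℕ)) : Continuous (mon2 α) :=
  (continuous_finset_prod _ fun i _ => ((continuous_apply i).comp continuous_fst).pow _).mul
    (continuous_finset_prod _ fun j _ => ((continuous_apply j).comp continuous_snd).pow _)

lemma LGW_eq_double_integral (p : ℕ)
    (X : Set (Fin dX → ℝ)) (Y : Set (Fin dY → ℝ))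
    (hX : IsCompact X) (hY : IsCompact Y)
    (cX : MvPolynomial (Fin dX ⊕ Fin dX) ℝ)
    (cY : MvPolynomial (Fin dY ⊕ Fin dY) ℝ)
    (a : (((Fin dX → ℕ) × (Fin dY → ℕ)) × ((Fin dX → ℕ) × (Fin dY → ℕ))) →₀ ℝ)
    (ha : ∀ (x x' : Fin dX → ℝ) (y y' : Fin dY → ℝ),
      (MvPolynomial.eval (Sum.elim x x') cX - MvPolynomial.eval (Sum.elim y y') cY) ^ p =
        a.sum fun γ c => c * (mon2 γ.1 (x, y) * mon2 γ.2 (x', y')))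
    (π : Measure ((Fin dX → ℝ) × (Fin dY → ℝ))) [IsFiniteMeasure π]
    (hπ : π (X ×ˢ Y)ᶜ = 0) :
    LGW a (fun α => ∫ z, mon2 α z ∂π) =
      ∫ z, ∫ z',
        (MvPolynomial.eval (Sum.elim z.1 z'.1) cX -
          MvPolynomial.eval (Sum.elim z.2 z'.2) cY) ^ p ∂π ∂π := by
  have hK : IsCompact (X ×ˢ Y) := hX.prod hY
  have hInt : ∀ α, Integrable (mon2 α) π := fun α =>
    integrable_of_null_compl π hK hπ (continuous_mon2 α)
  set M : ((Fin dX → ℕ) × (Fin dY → ℕ)) → ℝ := fun α => ∫ z, mon2 α z ∂π with hM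
  have h1 : ∀ z : (Fin dX → ℝ) × (Fin dY → ℝ),
      (∫ z', (MvPolynomial.eval (Sum.elim z.1 z'.1) cX -
        MvPolynomial.eval (Sum.elim z.2 z'.2) cY) ^ p ∂π) =
      ∑ γ ∈ a.support, a γ * (mon2 γ.1 z * M γ.2) := by
    intro z
    have he : (fun z' : (Fin dX → ℝ) × (Fin dY → ℝ) =>
        (MvPolynomial.eval (Sum.elim z.1 z'.1) cX -
          MvPolynomial.eval (Sum.elim z.2 z'.2) cY) ^ p)
        = fun z' => ∑ γ ∈ a.support, a γ * (mon2 γ.1 z * mon2 γ.2 z') := by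
      funext z'
      rw [ha z.1 z'.1 z.2 z'.2, Finsupp.sum]
    rw [he, integral_finset_sum _ (fun γ _ => by
      simpa [mul_assoc] using (hInt γ.2).const_mul (a γ * mon2 γ.1 z))]
    exact Finset.sum_congr rfl fun γ _ => by
      rw [integral_const_mul, integral_const_mul]
  have h2 : ∀ γ ∈ a.support, (fun z => a γ * (mon2 γ.1 z * M γ.2))
      = fun z => (a γ * M γ.2) * mon2 γ.1 z := by
    intro γ _; funext z; ring
  calc LGW a M = ∑ γ ∈ a.support, a γ * M γ.1 * M γ.2 := by rw [LGW, Finsupp.sum]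
    _ = ∑ γ ∈ a.support, ∫ z, a γ * (mon2 γ.1 z * M γ.2) ∂π := by
        refine Finset.sum_congr rfl fun γ hγ => ?_
        rw [h2 γ hγ, integral_const_mul]
        show a γ * M γ.1 * M γ.2 = a γ * M γ.2 * M γ.1
        ring
    _ = ∫ z, ∑ γ ∈ a.support, a γ * (mon2 γ.1 z * M γ.2) ∂π := by
        rw [integral_finset_sum _ (fun γ hγ => by
          rw [h2 γ hγ]; exact (hInt γ.1).const_mul _)]
    _ = _ := by
        refine (integral_congr_ae (Filter.Eventually.of_forall fun z => ?_)).symm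
        exact h1 z

end Helpers

/-- For compact `X ⊆ ℝ^{d_X}`, `Y ⊆ ℝ^{d_Y}`, `μ ∈ P(X)`, `ν ∈ P(Y)`,
even `p`, and polynomial costs `c_X`, `c_Y`, the Gromov-Wasserstein problem
`GW_p^p = inf_{π ∈ Π(X×Y;μ,ν)} ∬ (c_X(x,x') − c_Y(y,y'))^p dπ dπ` equals the generalized
moment problem `inf_{y ∈ Π_mom} L^{GW_p}(y)`, where `a` is the coefficient family of the
polynomial expansion of `(c_X − c_Y)^p`; moreover `L^{GW_p}(m(π))` equals the double
integral for every probability measure `π` on `X × Y`. -/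
theorem stmt_12 (p : ℕ) (hp : Even p)
    (X : Set (Fin dX → ℝ)) (Y : Set (Fin dY → ℝ))
    (hX : IsCompact X) (hY : IsCompact Y)
    (μ : Measure (Fin dX → ℝ)) (ν : Measure (Fin dY → ℝ))
    [IsProbabilityMeasure μ] [IsProbabilityMeasure ν]
    (hμ : μ Xᶜ = 0) (hν : ν Yᶜ = 0)
    (cX : MvPolynomial (Fin dX ⊕ Fin dX) ℝ)
    (cY : MvPolynomial (Fin dY ⊕ Fin dY) ℝ)
    (a : (((Fin dX → ℕ) × (Fin dY → ℕ)) × ((Fin dX → ℕ) × (Fin dY → ℕ))) →₀ ℝ)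
    (ha : ∀ (x x' : Fin dX → ℝ) (y y' : Fin dY → ℝ),
      (MvPolynomial.eval (Sum.elim x x') cX - MvPolynomial.eval (Sum.elim y y') cY) ^ p =
        a.sum fun γ c => c * (mon2 γ.1 (x, y) * mon2 γ.2 (x', y'))) :
    sInf {v | ∃ π ∈ CouplingsXY X Y μ ν,
        v = ∫ z, ∫ z',
          (MvPolynomial.eval (Sum.elim z.1 z'.1) cX -
            MvPolynomial.eval (Sum.elim z.2 z'.2) cY) ^ p ∂π ∂π} =
      sInf {v | ∃ y ∈ GWMomCouplings X Y μ ν, v = LGW a y} ∧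
    ∀ π : Measure ((Fin dX → ℝ) × (Fin dY → ℝ)), IsProbabilityMeasure π →
      π (X ×ˢ Y)ᶜ = 0 →
      LGW a (fun α => ∫ z, mon2 α z ∂π) =
        ∫ z, ∫ z',
          (MvPolynomial.eval (Sum.elim z.1 z'.1) cX -
            MvPolynomial.eval (Sum.elim z.2 z'.2) cY) ^ p ∂π ∂π := by
  constructor
  · -- equality of the two infima: the value sets coincide
    have hsets : {v | ∃ π ∈ CouplingsXY X Y μ ν,
        v = ∫ z, ∫ z',
          (MvPolynomial.eval (Sum.elim z.1 z'.1) cX -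
            MvPolynomial.eval (Sum.elim z.2 z'.2) cY) ^ p ∂π ∂π} =
        {v | ∃ y ∈ GWMomCouplings X Y μ ν, v = LGW a y} := by
      apply Set.Subset.antisymm
      · rintro v ⟨π, ⟨hprob, hnull, hfst, hsnd⟩, hv⟩
        haveI := hprob
        refine ⟨fun α => ∫ z, mon2 α z ∂π, ⟨⟨π, inferInstance, hnull, fun α => rfl⟩, ?_, ?_⟩, ?_⟩
        · intro α
          have hcont : Continuous fun x : Fin dX → ℝ => ∏ i, x i ^ α i :=
            continuous_finset_prod _ fun i _ => (continuous_apply i).pow _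
          calc ∫ z, mon2 (α, fun _ => 0) z ∂π
              = ∫ z, ∏ i, z.1 i ^ α i ∂π := by simp [mon2]
            _ = ∫ x, ∏ i, x i ^ α i ∂(π.map Prod.fst) :=
                (integral_map measurable_fst.aemeasurable hcont.aestronglyMeasurable).symm
            _ = ∫ x, ∏ i, x i ^ α i ∂μ := by rw [hfst]
        · intro β
          have hcont : Continuous fun x : Fin dY → ℝ => ∏ j, x j ^ β j :=
            continuous_finset_prod _ fun j _ => (continuous_apply j).pow _
          calc ∫ z, mon2 (fun _ => 0, β) z ∂π
              = ∫ z, ∏ j, z.2 j ^ β j ∂π := by simp [mon2]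
            _ = ∫ x, ∏ j, x j ^ β j ∂(π.map Prod.snd) :=
                (integral_map measurable_snd.aemeasurable hcont.aestronglyMeasurable).symm
            _ = ∫ x, ∏ j, x j ^ β j ∂ν := by rw [hsnd]
        · rw [hv, LGW_eq_double_integral p X Y hX hY cX cY a ha π hnull]
      · rintro v ⟨y, ⟨⟨π, hfin, hnull, hrep⟩, hmX, hmY⟩, hv⟩
        haveI := hfin
        -- π is a probability measure
        have h1 : y (fun _ => 0, fun _ => 0) = (π Set.univ).toReal := by
          rw [hrep]
          simp [mon2]
          rfl
        have h2 : y (fun _ => 0, fun _ => 0) = 1 := by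
          rw [hmX]
          simp
        have hprob : IsProbabilityMeasure π :=
          ⟨(ENNReal.toReal_eq_one_iff _).mp (by rw [← h1, h2])⟩
        -- first marginal
        have hfst : π.map Prod.fst = μ := by
          refine meas_eq_of_moments_eq hX ?_ hμ ?_
          · rw [Measure.map_apply measurable_fst hX.isClosed.measurableSet.compl]
            refine measure_mono_null (fun z hz => ?_) hnull
            simp only [Set.mem_preimage, Set.mem_compl_iff, Set.mem_prod, not_and] at hz ⊢
            exact fun h _ => hz h
          · intro α
            have hcont : Continuous fun x : Fin dX → ℝ => ∏ i, x i ^ α i :=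
              continuous_finset_prod _ fun i _ => (continuous_apply i).pow _
            calc ∫ x, ∏ i, x i ^ α i ∂(π.map Prod.fst)
                = ∫ z, ∏ i, z.1 i ^ α i ∂π :=
                  integral_map measurable_fst.aemeasurable hcont.aestronglyMeasurable
              _ = ∫ z, mon2 (α, fun _ => 0) z ∂π := by simp [mon2]
              _ = y (α, fun _ => 0) := (hrep _).symm
              _ = ∫ x, ∏ i, x i ^ α i ∂μ := hmX α
        -- second marginal
        have hsnd : π.map Prod.snd = ν := by
          refine meas_eq_of_moments_eq hY ?_ hν ?_
          · rw [Measure.map_apply measurable_snd hY.isClosed.measurableSet.compl]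
            refine measure_mono_null (fun z hz => ?_) hnull
            simp only [Set.mem_preimage, Set.mem_compl_iff, Set.mem_prod, not_and] at hz ⊢
            exact fun _ h => hz h
          · intro β
            have hcont : Continuous fun x : Fin dY → ℝ => ∏ j, x j ^ β j :=
              continuous_finset_prod _ fun j _ => (continuous_apply j).pow _
            calc ∫ x, ∏ j, x j ^ β j ∂(π.map Prod.snd)
                = ∫ z, ∏ j, z.2 j ^ β j ∂π :=
                  integral_map measurable_snd.aemeasurable hcont.aestronglyMeasurable
              _ = ∫ z, mon2 (fun _ => 0, β) z ∂π := by simp [mon2]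
              _ = y (fun _ => 0, β) := (hrep _).symm
              _ = ∫ x, ∏ j, x j ^ β j ∂ν := hmY β
        refine ⟨π, ⟨hprob, hnull, hfst, hsnd⟩, ?_⟩
        have hy : y = fun α => ∫ z, mon2 α z ∂π := funext hrep
        rw [hv, hy, LGW_eq_double_integral p X Y hX hY cX cY a ha π hnull]
    rw [hsets]
  · -- the quadratic functional evaluated at moments equals the double integral
    intro π hprob hnull
    haveI := hprob
    exact LGW_eq_double_integral p X Y hX hY cX cY a ha π hnull

end Stmt12
end

section
/- Let X ⊆ ℝ^{d_X} and Y ⊆ ℝ^{d_Y} be compact Borel sets, μ ∈ P(X), ν ∈ P(Y), let p ∈ ℕ be odd, let c_X, c_Y be polynomials, and set Z = X × Y × X × Y, g(z) = c_X(x,x') − c_Y(y,y') for z = (x,y,x',y'), A^+ = { z ∈ Z : g(z) ≥ 0 }, A^- = { z ∈ Z : g(z) < 0 }. Then GW_p^p(c_X, c_Y, μ, ν) = inf { ∫_Z g(z)^p dγ^+(z) − ∫_Z g(z)^p dγ^-(z) }, where the infimum runs over π ∈ Π(X×Y; μ,ν), γ^+ a finite positive Borel measure supported on A^+, and γ^-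 a finite positive Borel measure supported on the closure of A^-, subject to γ^+ + γ^- = π ⊗ π; the optimal value equals inf_{π ∈ Π(X×Y; μ,ν)} ∬ |c_X(x,x') − c_Y(y,y')|^p dπ(x,y) dπ(x',y'). -/
open MeasureTheory

namespace Stmt13

variable {dX dY : ℕ}

/-- Couplings `Π(X×Y; μ, ν)`. -/
def CouplingsXY (X : Set (Fin dX → ℝ)) (Y : Set (Fin dY → ℝ))
    (μ : Measure (Fin dX → ℝ)) (ν : Measure (Fin dY → ℝ)) :
    Set (Measure ((Fin dX → ℝ) × (Fin dY → ℝ))) :=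
  {π | IsProbabilityMeasure π ∧ π (X ×ˢ Y)ᶜ = 0 ∧
    π.map Prod.fst = μ ∧ π.map Prod.snd = ν}

/-- The function `g(z) = c_X(x,x') − c_Y(y,y')` on `Z = (X×Y) × (X×Y)`,
for `z = ((x,y),(x',y'))`. -/
noncomputable def gfun (cX : MvPolynomial (Fin dX ⊕ Fin dX) ℝ)
    (cY : MvPolynomial (Fin dY ⊕ Fin dY) ℝ)
    (z : ((Fin dX → ℝ) × (Fin dY → ℝ)) × ((Fin dX → ℝ) × (Fin dY → ℝ))) : ℝ :=
  MvPolynomial.eval (Sum.elim z.1.1 z.2.1) cX - MvPolynomial.eval (Sum.elim z.1.2 z.2.2) cY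

theorem cont_g (cX : MvPolynomial (Fin dX ⊕ Fin dX) ℝ)
    (cY : MvPolynomial (Fin dY ⊕ Fin dY) ℝ) : Continuous (gfun cX cY) := by
  apply Continuous.sub
  · exact (MvPolynomial.continuous_eval cX).comp (continuous_pi fun i => by
      cases i with
      | inl j => exact (continuous_apply j).comp continuous_fst.fst
      | inr j => exact (continuous_apply j).comp continuous_snd.fst)
  · exact (MvPolynomial.continuous_eval cY).comp (continuous_pi fun i => by
      cases i with
      | inl j => exact (continuous_apply j).comp continuous_fst.snd
      | inr j => exact (continuous_apply j).comp continuous_snd.snd)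


/-- For compact `X`, `Y`, probability measures `μ ∈ P(X)`, `ν ∈ P(Y)`,
odd `p` and polynomial costs `c_X, c_Y`, with `A⁺ = {z ∈ Z : g(z) ≥ 0}` and
`A⁻ = {z ∈ Z : g(z) < 0}` on `Z = (X×Y)²`: the value
`inf { ∫ g^p dγ⁺ − ∫ g^p dγ⁻ }` over couplings `π ∈ Π(X×Y;μ,ν)` and finite positive
measures `γ⁺` supported on `A⁺`, `γ⁻` supported on the closure of `A⁻`, subject to
`γ⁺ + γ⁻ = π ⊗ π`, equals `GW_p^p = inf_{π} ∬ |c_X − c_Y|^p dπ dπ`. -/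
theorem stmt_13 (p : ℕ) (hp : Odd p)
    (X : Set (Fin dX → ℝ)) (Y : Set (Fin dY → ℝ))
    (hX : IsCompact X) (hY : IsCompact Y)
    (μ : Measure (Fin dX → ℝ)) (ν : Measure (Fin dY → ℝ))
    [IsProbabilityMeasure μ] [IsProbabilityMeasure ν]
    (hμ : μ Xᶜ = 0) (hν : ν Yᶜ = 0)
    (cX : MvPolynomial (Fin dX ⊕ Fin dX) ℝ)
    (cY : MvPolynomial (Fin dY ⊕ Fin dY) ℝ) :
    sInf {v | ∃ π ∈ CouplingsXY X Y μ ν,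
      ∃ γp γm :
        Measure (((Fin dX → ℝ) × (Fin dY → ℝ)) × ((Fin dX → ℝ) × (Fin dY → ℝ))),
        IsFiniteMeasure γp ∧
        γp {z ∈ (X ×ˢ Y) ×ˢ (X ×ˢ Y) | 0 ≤ gfun cX cY z}ᶜ = 0 ∧
        IsFiniteMeasure γm ∧
        γm (closure {z ∈ (X ×ˢ Y) ×ˢ (X ×ˢ Y) | gfun cX cY z < 0})ᶜ = 0 ∧
        γp + γm = π.prod π ∧
        v = (∫ z, gfun cX cY z ^ p ∂γp) - ∫ z, gfun cX cY z ^ p ∂γm} =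
    sInf {v | ∃ π ∈ CouplingsXY X Y μ ν,
      v = ∫ z, ∫ z', |gfun cX cY (z, z')| ^ p ∂π ∂π} := by
  set g := gfun cX cY with hgdef
  have hg : Continuous g := cont_g cX cY
  set W := (X ×ˢ Y : Set ((Fin dX → ℝ) × (Fin dY → ℝ))) with hW
  set K := W ×ˢ W with hKdef
  have hKcomp : IsCompact K := (hX.prod hY).prod (hX.prod hY)
  have hKcl : IsClosed K := hKcomp.isClosed
  have hKm : MeasurableSet K := hKcl.measurableSet
  -- uniform bound on K
  obtain ⟨C, hC⟩ : ∃ C, ∀ z ∈ K, ‖|g z| ^ p‖ ≤ C :=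
    hKcomp.exists_bound_of_continuousOn ((hg.abs.pow p).continuousOn)
  -- integrability helper
  have key : ∀ (θ : Measure (((Fin dX → ℝ) × (Fin dY → ℝ)) × ((Fin dX → ℝ) × (Fin dY → ℝ)))),
      IsFiniteMeasure θ → θ Kᶜ = 0 →
      Integrable (fun z => |g z| ^ p) θ ∧ Integrable (fun z => g z ^ p) θ := by
    intro θ hfin hnull
    haveI := hfin
    have haeK : ∀ᵐ z ∂θ, z ∈ K := by
      rw [ae_iff]
      exact hnull
    have hb1 : ∀ᵐ z ∂θ, ‖|g z| ^ p‖ ≤ C := haeK.mono fun z hz => hC z hz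
    have hb2 : ∀ᵐ z ∂θ, ‖g z ^ p‖ ≤ C := by
      refine hb1.mono fun z hz => ?_
      simpa [abs_pow] using hz
    constructor
    · exact Integrable.mono' (integrable_const C)
        ((hg.abs.pow p).aestronglyMeasurable) hb1
    · exact Integrable.mono' (integrable_const C)
        ((hg.pow p).aestronglyMeasurable) hb2
  -- prod measure null outside K
  have prodnull : ∀ π ∈ CouplingsXY X Y μ ν, (π.prod π) Kᶜ = 0 := by
    rintro π ⟨hπ1, hπ2, -, -⟩
    haveI := hπ1
    have hsub : Kᶜ ⊆ (Wᶜ ×ˢ Set.univ) ∪ (Set.univ ×ˢ Wᶜ) := by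
      intro z hz
      simp only [hKdef, Set.mem_compl_iff, Set.mem_prod, not_and_or] at hz
      rcases hz with h | h
      · exact Or.inl ⟨h, Set.mem_univ _⟩
      · exact Or.inr ⟨Set.mem_univ _, h⟩
    refine measure_mono_null hsub (le_antisymm ?_ (zero_le))
    refine le_trans (measure_union_le _ _) ?_
    rw [Measure.prod_prod, Measure.prod_prod, hπ2]
    simp
  -- main computation
  have main : ∀ π ∈ CouplingsXY X Y μ ν,
      ∀ γp γm, IsFiniteMeasure γp →
        γp {z ∈ K | 0 ≤ g z}ᶜ = 0 →
        IsFiniteMeasure γm →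
        γm (closure {z ∈ K | g z < 0})ᶜ = 0 →
        γp + γm = π.prod π →
        (∫ z, g z ^ p ∂γp) - ∫ z, g z ^ p ∂γm
          = ∫ z, ∫ z', |g (z, z')| ^ p ∂π ∂π := by
    intro π hπ γp γm hfp hsp hfm hsm hsum
    haveI := hπ.1
    haveI := hfp; haveI := hfm
    have hπnull : (π.prod π) Kᶜ = 0 := prodnull π hπ
    have hsum' := hπnull
    rw [← hsum, Measure.add_apply] at hsum'
    obtain ⟨hpnull, hmnull⟩ := add_eq_zero.mp hsum' 
    obtain ⟨hip_abs, hip⟩ := key γp hfp hpnull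
    obtain ⟨him_abs, him⟩ := key γm hfm hmnull
    -- a.e. sign info
    have haep : ∀ᵐ z ∂γp, 0 ≤ g z := by
      have : ∀ᵐ z ∂γp, z ∈ {z ∈ K | 0 ≤ g z} := by
        rw [ae_iff, ← Set.compl_def]; exact hsp
      exact this.mono fun z hz => hz.2
    have hclsub : closure {z ∈ K | g z < 0} ⊆ {z | g z ≤ 0} := by
      apply closure_minimal
      · intro z hz; exact hz.2.le
      · exact isClosed_le hg continuous_const
    have haem : ∀ᵐ z ∂γm, g z ≤ 0 := by
      have : ∀ᵐ z ∂γm, z ∈ closure {z ∈ K | g z < 0} := by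
        rw [ae_iff, ← Set.compl_def]; exact hsm
      exact this.mono fun z hz => hclsub hz
    have e1 : ∫ z, g z ^ p ∂γp = ∫ z, |g z| ^ p ∂γp := by
      refine integral_congr_ae (haep.mono fun z hz => ?_)
      show g z ^ p = |g z| ^ p
      rw [abs_of_nonneg hz]
    have e2 : ∫ z, g z ^ p ∂γm = - ∫ z, |g z| ^ p ∂γm := by
      rw [← integral_neg]
      refine integral_congr_ae (haem.mono fun z hz => ?_)
      show g z ^ p = -(|g z| ^ p)
      rw [abs_of_nonpos hz, hp.neg_pow, neg_neg]
    rw [e1, e2, sub_neg_eq_add, ← integral_add_measure hip_abs him_abs, hsum]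
    -- Fubini
    obtain ⟨hprod_abs, -⟩ := key (π.prod π) inferInstance hπnull
    exact integral_prod _ hprod_abs
  congr 1
  ext v
  simp only [Set.mem_setOf_eq]
  constructor
  · rintro ⟨π, hπ, γp, γm, hfp, hsp, hfm, hsm, hsum, rfl⟩
    exact ⟨π, hπ, (main π hπ γp γm hfp hsp hfm hsm hsum)⟩
  · rintro ⟨π, hπ, rfl⟩
    haveI := hπ.1
    set S := {z ∈ K | 0 ≤ g z} with hS
    set T := {z ∈ K | g z < 0} with hT
    have hSm : MeasurableSet S := hKm.inter (measurableSet_le measurable_const hg.measurable)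
    have hTm : MeasurableSet T := hKm.inter (measurableSet_lt hg.measurable measurable_const)
    have hsp : ((π.prod π).restrict S) Sᶜ = 0 := by
      rw [Measure.restrict_apply hSm.compl]
      simp
    have hsm : ((π.prod π).restrict T) (closure T)ᶜ = 0 := by
      rw [Measure.restrict_apply (measurableSet_closure (s := T)).compl]
      refine measure_mono_null ?_ (measure_empty (μ := π.prod π))
      intro z hz
      exact absurd (subset_closure hz.2) hz.1
    have hdisj : Disjoint S T :=
      Set.disjoint_left.mpr fun z hz hz' => absurd hz.2 (not_le.mpr hz'.2)
    have hST : S ∪ T = K := by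
      ext z
      simp only [hS, hT, Set.mem_union, Set.mem_setOf_eq]
      constructor
      · rintro (h | h) <;> exact h.1
      · intro h
        rcases le_or_gt 0 (g z) with h' | h'
        · exact Or.inl ⟨h, h'⟩
        · exact Or.inr ⟨h, h'⟩
    have hsum : (π.prod π).restrict S + (π.prod π).restrict T = π.prod π := by
      rw [← Measure.restrict_union hdisj hTm, hST]
      exact Measure.restrict_eq_self_of_ae_mem
        (by rw [ae_iff, ← Set.compl_def]; exact prodnull π hπ)
    exact ⟨π, hπ, (π.prod π).restrict S, (π.prod π).restrict T,
      inferInstance, hsp, inferInstance, hsm, hsum,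
      (main π hπ _ _ inferInstance hsp inferInstance hsm hsum).symm⟩


end Stmt13
end

section
/- Let n ∈ ℕ, R > 0, r ∈ ℕ, and let y = (y_α)_{α∈ℕ^n} be a sequence of real numbers such that ℓ_y(f²) ≥ 0 for every polynomial f ∈ ℝ[x] of degree at most r, and ℓ_y((R² − ‖x‖₂²) f²) ≥ 0 for every polynomial f ∈ ℝ[x] of degree at most r − 1 (equivalently, the moment matrix M_r(y) and the localizing matrix M_{r−1}((R² − ‖x‖₂²) y) are positive semidefinite). Then for every 0 ≤ k ≤ r and every multi-index α ∈ ℕ^n with |α| ≤ 2k, one has |y_α| ≤ y_0 · max{1, R^{2k}}. -/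
open MeasureTheory

/-- The Riesz functional `ℓ_y(p) = Σ_α p_α y_α` associated with the sequence `y`. -/
noncomputable def riesz {n : ℕ} (y : (Fin n →₀ ℕ) → ℝ) (p : MvPolynomial (Fin n) ℝ) : ℝ :=
  ∑ α ∈ p.support, p.coeff α * y α

namespace RieszAux

open MvPolynomial

variable {n : ℕ} (y : (Fin n →₀ ℕ) → ℝ)

lemma riesz_eq_sum {p : MvPolynomial (Fin n) ℝ} {s : Finset (Fin n →₀ ℕ)}
    (hs : p.support ⊆ s) : riesz y p = ∑ α ∈ s, p.coeff α * y α := by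
  rw [riesz]
  refine Finset.sum_subset hs ?_
  intro x _ hx
  simp [MvPolynomial.notMem_support_iff.mp hx]

lemma riesz_add (p q : MvPolynomial (Fin n) ℝ) :
    riesz y (p + q) = riesz y p + riesz y q := by
  classical
  rw [riesz_eq_sum y (s := p.support ∪ q.support) MvPolynomial.support_add,
      riesz_eq_sum y (s := p.support ∪ q.support) Finset.subset_union_left,
      riesz_eq_sum y (s := p.support ∪ q.support) Finset.subset_union_right,
      ← Finset.sum_add_distrib]
  refine Finset.sum_congr rfl fun x _ => ?_
  rw [coeff_add, add_mul]

lemma riesz_smul (c : ℝ) (p : MvPolynomial (Fin n) ℝ) :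
    riesz y (c • p) = c * riesz y p := by
  rw [riesz_eq_sum y (s := p.support) MvPolynomial.support_smul, riesz, Finset.mul_sum]
  refine Finset.sum_congr rfl fun x _ => ?_
  rw [coeff_smul, smul_eq_mul, mul_assoc]

/-- The Riesz functional as a linear map. -/
noncomputable def L : MvPolynomial (Fin n) ℝ →ₗ[ℝ] ℝ where
  toFun := riesz y
  map_add' := riesz_add y
  map_smul' := riesz_smul y

@[simp] lemma L_apply (p : MvPolynomial (Fin n) ℝ) : L y p = riesz y p := rfl

lemma riesz_monomial (α : Fin n →₀ ℕ) : riesz y (monomial α 1) = y α := by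
  classical
  rw [riesz]
  rw [support_monomial]
  simp [coeff_monomial]

lemma riesz_one : riesz y 1 = y 0 := by
  have : (1 : MvPolynomial (Fin n) ℝ) = monomial 0 1 := by simp
  rw [this, riesz_monomial]

/-- Cauchy–Schwarz for the Riesz functional. -/
lemma cauchy_schwarz {r : ℕ}
    (h1 : ∀ f : MvPolynomial (Fin n) ℝ, f.totalDegree ≤ r → 0 ≤ riesz y (f ^ 2))
    {f g : MvPolynomial (Fin n) ℝ} (hf : f.totalDegree ≤ r) (hg : g.totalDegree ≤ r) :
    (riesz y (f * g)) ^ 2 ≤ riesz y (f ^ 2) * riesz y (g ^ 2) := by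
  have key : ∀ t : ℝ, 0 ≤ riesz y (g ^ 2) * (t * t) + (2 * riesz y (f * g)) * t
      + riesz y (f ^ 2) := by
    intro t
    have hdeg : (f + t • g).totalDegree ≤ r := by
      refine le_trans (totalDegree_add _ _) (max_le hf ?_)
      exact le_trans (totalDegree_smul_le _ _) hg
    have h := h1 (f + t • g) hdeg
    have expand : (f + t • g) ^ 2 = f ^ 2 + (2 * t) • (f * g) + (t * t) • g ^ 2 := by
      rw [smul_eq_C_mul, smul_eq_C_mul, smul_eq_C_mul, map_mul, map_mul]
      have hC2 : (C (2 : ℝ) : MvPolynomial (Fin n) ℝ) = 2 := map_ofNat _ 2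
      rw [hC2]; ring
    rw [expand] at h
    rw [riesz_add, riesz_add, riesz_smul, riesz_smul] at h
    linarith
  have hd := discrim_le_zero key
  rw [discrim] at hd
  nlinarith [hd]

lemma step {r : ℕ} {R : ℝ}
    (h1 : ∀ f : MvPolynomial (Fin n) ℝ, f.totalDegree ≤ r → 0 ≤ riesz y (f ^ 2))
    (h2 : ∀ f : MvPolynomial (Fin n) ℝ, f.totalDegree + 1 ≤ r →
      0 ≤ riesz y ((MvPolynomial.C (R ^ 2) - ∑ i, MvPolynomial.X i ^ 2) * f ^ 2))
    {f : MvPolynomial (Fin n) ℝ} (hf : f.totalDegree + 1 ≤ r) (i : Fin n) :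
    riesz y ((X i * f) ^ 2) ≤ R ^ 2 * riesz y (f ^ 2) := by
  have hdegXj : ∀ j : Fin n, (X j * f).totalDegree ≤ r := by
    intro j
    refine le_trans (totalDegree_mul _ _) ?_
    rw [totalDegree_X]
    omega
  have hid : (MvPolynomial.C (R ^ 2) - ∑ j, MvPolynomial.X j ^ 2) * f ^ 2
      = (R ^ 2) • f ^ 2 - ∑ j : Fin n, (X j * f) ^ 2 := by
    rw [smul_eq_C_mul, sub_mul, Finset.sum_mul]
    refine congrArg (HSub.hSub _) ?_
    refine Finset.sum_congr rfl fun j _ => ?_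
    ring
  have h := h2 f hf
  rw [hid] at h
  have hL : riesz y ((R ^ 2) • f ^ 2 - ∑ j : Fin n, (X j * f) ^ 2)
      = R ^ 2 * riesz y (f ^ 2) - ∑ j : Fin n, riesz y ((X j * f) ^ 2) := by
    have := map_sub (L y) ((R ^ 2) • f ^ 2) (∑ j : Fin n, (X j * f) ^ 2)
    have hsum := map_sum (L y) (fun j : Fin n => (X j * f) ^ 2) Finset.univ
    simp only [L_apply] at this hsum
    rw [this, hsum, riesz_smul]
  rw [hL] at h
  have hle : riesz y ((X i * f) ^ 2) ≤ ∑ j : Fin n, riesz y ((X j * f) ^ 2) := by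
    refine Finset.single_le_sum (f := fun j => riesz y ((X j * f) ^ 2)) ?_ (Finset.mem_univ i)
    intro j _
    exact h1 _ (hdegXj j)
  linarith

lemma diag_bound {r : ℕ} {R : ℝ} (hR : 0 < R)
    (h1 : ∀ f : MvPolynomial (Fin n) ℝ, f.totalDegree ≤ r → 0 ≤ riesz y (f ^ 2))
    (h2 : ∀ f : MvPolynomial (Fin n) ℝ, f.totalDegree + 1 ≤ r →
      0 ≤ riesz y ((MvPolynomial.C (R ^ 2) - ∑ i, MvPolynomial.X i ^ 2) * f ^ 2)) :
    ∀ m : ℕ, m ≤ r → ∀ β : Fin n →₀ ℕ, (β.sum fun _ e => e) = m →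
      riesz y ((monomial β (1:ℝ)) ^ 2) ≤ R ^ (2 * m) * y 0 := by
  intro m
  induction m with
  | zero =>
    intro _ β hβ
    have hβ0 : β = 0 := by
      ext i
      have hs : (β.sum fun _ e => e) = ∑ j : Fin n, β j :=
        Finsupp.sum_fintype _ _ (fun _ => rfl)
      rw [hs] at hβ
      have := Finset.sum_eq_zero_iff.mp hβ i (Finset.mem_univ i)
      simpa using this
    subst hβ0
    have h1' : (monomial (0 : Fin n →₀ ℕ) (1:ℝ)) = 1 := by simp
    rw [h1', one_pow, riesz_one]
    simp
  | succ m ih =>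
    intro hm β hβ
    have hex : ∃ i, β i ≠ 0 := by
      by_contra hc
      push_neg at hc
      have : β = 0 := by ext i; simp [hc i]
      subst this
      simp [Finsupp.sum_zero_index] at hβ
    obtain ⟨i, hi⟩ := hex
    set β' := β - Finsupp.single i 1 with hβ'def
    have hle : Finsupp.single i 1 ≤ β := Finsupp.single_le_iff.mpr (by omega)
    have hrec : β' + Finsupp.single i 1 = β := tsub_add_cancel_of_le hle
    have hsum' : (β'.sum fun _ e => e) = m := by
      have hadd : ((β' + Finsupp.single i 1).sum fun _ e => e)
          = (β'.sum fun _ e => e) + ((Finsupp.single i 1 : Fin n →₀ ℕ).sum fun _ e => e) :=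
        Finsupp.sum_add_index' (fun _ => rfl) (fun _ _ _ => rfl)
      rw [hrec] at hadd
      have hsingle : ((Finsupp.single i 1 : Fin n →₀ ℕ).sum fun _ e => e) = 1 :=
        Finsupp.sum_single_index rfl
      omega
    have hmono : monomial β (1:ℝ) = X i * monomial β' 1 := by
      rw [X, monomial_mul, one_mul, add_comm, hrec]
    have hdegβ' : (monomial β' (1:ℝ)).totalDegree + 1 ≤ r := by
      rw [totalDegree_monomial _ (one_ne_zero), hsum']
      omega
    have hstep := step y h1 h2 hdegβ' i
    have hih := ih (by omega) β' hsum'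
    have hR2 : (0:ℝ) ≤ R ^ 2 := sq_nonneg R
    calc riesz y ((monomial β (1:ℝ)) ^ 2)
        = riesz y ((X i * monomial β' 1) ^ 2) := by rw [hmono]
      _ ≤ R ^ 2 * riesz y ((monomial β' (1:ℝ)) ^ 2) := hstep
      _ ≤ R ^ 2 * (R ^ (2 * m) * y 0) := by
          exact mul_le_mul_of_nonneg_left hih hR2
      _ = R ^ (2 * (m + 1)) * y 0 := by
          rw [show 2 * (m + 1) = 2 * m + 2 by ring, pow_add]
          ring

lemma exists_le_sum_eq (α : Fin n →₀ ℕ) :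
    ∀ t, t ≤ (α.sum fun _ e => e) → ∃ β : Fin n →₀ ℕ, β ≤ α ∧ (β.sum fun _ e => e) = t := by
  have hs : ∀ γ : Fin n →₀ ℕ, (γ.sum fun _ e => e) = ∑ j : Fin n, γ j :=
    fun γ => Finsupp.sum_fintype _ _ (fun _ => rfl)
  intro t
  induction t with
  | zero => intro _; exact ⟨0, zero_le, by simp⟩
  | succ t ih =>
    intro ht
    obtain ⟨β, hβle, hβsum⟩ := ih (by omega)
    have hlt : ∃ i, β i < α i := by
      by_contra hc
      push_neg at hc
      have : (α.sum fun _ e => e) ≤ (β.sum fun _ e => e) := by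
        rw [hs α, hs β]
        exact Finset.sum_le_sum fun j _ => hc j
      omega
    obtain ⟨i, hi⟩ := hlt
    refine ⟨β + Finsupp.single i 1, ?_, ?_⟩
    · rw [Finsupp.le_def]
      intro j
      rcases eq_or_ne j i with rfl | hj
      · simp only [Finsupp.add_apply, Finsupp.single_eq_same]
        omega
      · simp only [Finsupp.add_apply, Finsupp.single_eq_of_ne' (Ne.symm hj), add_zero]
        exact Finsupp.le_def.mp hβle j
    · have hadd : ((β + Finsupp.single i 1).sum fun _ e => e)
          = (β.sum fun _ e => e) + ((Finsupp.single i 1 : Fin n →₀ ℕ).sum fun _ e => e) :=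
        Finsupp.sum_add_index' (fun _ => rfl) (fun _ _ _ => rfl)
      have hsingle : ((Finsupp.single i 1 : Fin n →₀ ℕ).sum fun _ e => e) = 1 :=
        Finsupp.sum_single_index rfl
      omega

end RieszAux

/-- Let `y` be a sequence with `ℓ_y(f²) ≥ 0` for every polynomial `f` of
degree at most `r` and `ℓ_y((R² − ‖x‖₂²) f²) ≥ 0` for every `f` of degree at most `r − 1`
(positive semidefiniteness of the moment and localizing matrices `M_r(y)` and
`M_{r−1}((R²−‖x‖₂²) y)`). Then for every `0 ≤ k ≤ r` and every multi-index `α` with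
`|α| ≤ 2k`, one has `|y_α| ≤ y_0 · max{1, R^{2k}}`. -/
theorem stmt_14 {n : ℕ} (R : ℝ) (hR : 0 < R) (r : ℕ)
    (y : (Fin n →₀ ℕ) → ℝ)
    (h1 : ∀ f : MvPolynomial (Fin n) ℝ, f.totalDegree ≤ r → 0 ≤ riesz y (f ^ 2))
    (h2 : ∀ f : MvPolynomial (Fin n) ℝ, f.totalDegree + 1 ≤ r →
      0 ≤ riesz y ((MvPolynomial.C (R ^ 2) - ∑ i, MvPolynomial.X i ^ 2) * f ^ 2)) :
    ∀ k ≤ r, ∀ α : Fin n →₀ ℕ, (α.sum fun _ e => e) ≤ 2 * k →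
      |y α| ≤ y 0 * max 1 (R ^ (2 * k)) := by
  classical
  open MvPolynomial RieszAux in
  intro k hk α hα
  -- y 0 ≥ 0
  have hy0 : 0 ≤ y 0 := by
    have := h1 1 (by simp)
    rwa [one_pow, riesz_one] at this
  set s := (α.sum fun _ e => e) with hs_def
  -- split α = β + γ with |β| = s - k ≤ k, |γ| ≤ k
  obtain ⟨β, hβle, hβsum⟩ := exists_le_sum_eq α (s - k) (by omega)
  set γ := α - β with hγdef
  have hγadd : β + γ = α := by
    rw [hγdef, add_comm]
    exact tsub_add_cancel_of_le hβle
  have hsum_add : ∀ a b : Fin n →₀ ℕ, ((a + b).sum fun _ e => e)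
      = (a.sum fun _ e => e) + (b.sum fun _ e => e) :=
    fun a b => Finsupp.sum_add_index' (fun _ => rfl) (fun _ _ _ => rfl)
  have hγsum : (γ.sum fun _ e => e) = s - (s - k) := by
    have := hsum_add β γ
    rw [hγadd] at this
    omega
  have hβk : (β.sum fun _ e => e) ≤ k := by omega
  have hγk : (γ.sum fun _ e => e) ≤ k := by omega
  set dβ := (β.sum fun _ e => e)
  set dγ := (γ.sum fun _ e => e)
  -- Cauchy–Schwarz with monomials
  have hdegβ : (monomial β (1:ℝ)).totalDegree ≤ r := by
    rw [totalDegree_monomial _ one_ne_zero]; omega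
  have hdegγ : (monomial γ (1:ℝ)).totalDegree ≤ r := by
    rw [totalDegree_monomial _ one_ne_zero]; omega
  have hcs := cauchy_schwarz y h1 hdegβ hdegγ
  have hmul : (monomial β (1:ℝ)) * monomial γ 1 = monomial α 1 := by
    rw [monomial_mul, one_mul, hγadd]
  rw [hmul, riesz_monomial] at hcs
  -- diagonal bounds
  have hAβ := diag_bound y hR h1 h2 dβ (by omega) β rfl
  have hAγ := diag_bound y hR h1 h2 dγ (by omega) γ rfl
  have hAβ0 : 0 ≤ riesz y ((monomial β (1:ℝ)) ^ 2) := h1 _ hdegβ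
  have hAγ0 : 0 ≤ riesz y ((monomial γ (1:ℝ)) ^ 2) := h1 _ hdegγ
  have hRpow : ∀ m : ℕ, (0:ℝ) ≤ R ^ m := fun m => pow_nonneg hR.le m
  have hprod : riesz y ((monomial β (1:ℝ)) ^ 2) * riesz y ((monomial γ (1:ℝ)) ^ 2)
      ≤ (R ^ (dβ + dγ) * y 0) ^ 2 := by
    have h1' : riesz y ((monomial β (1:ℝ)) ^ 2) * riesz y ((monomial γ (1:ℝ)) ^ 2)
        ≤ (R ^ (2 * dβ) * y 0) * (R ^ (2 * dγ) * y 0) := by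
      refine mul_le_mul hAβ hAγ hAγ0 ?_
      exact mul_nonneg (hRpow _) hy0
    have h2' : (R ^ (2 * dβ) * y 0) * (R ^ (2 * dγ) * y 0) = (R ^ (dβ + dγ) * y 0) ^ 2 := by
      rw [show 2 * dβ = dβ + dβ by ring, show 2 * dγ = dγ + dγ by ring,
        pow_add, pow_add, pow_add]
      ring
    linarith
  have hsq : (y α) ^ 2 ≤ (R ^ (dβ + dγ) * y 0) ^ 2 := le_trans hcs hprod
  have hbound_nonneg : 0 ≤ R ^ (dβ + dγ) * y 0 := mul_nonneg (hRpow _) hy0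
  have habs : |y α| ≤ R ^ (dβ + dγ) * y 0 := by
    have := Real.sqrt_le_sqrt hsq
    rwa [Real.sqrt_sq_eq_abs, Real.sqrt_sq hbound_nonneg] at this
  have hds : dβ + dγ = s := by
    have := hsum_add β γ
    rw [hγadd] at this
    omega
  rw [hds] at habs
  -- R^s ≤ max 1 (R^(2k))
  have hfinal : R ^ s ≤ max 1 (R ^ (2 * k)) := by
    rcases le_or_gt 1 R with hR1 | hR1
    · exact le_max_of_le_right (pow_le_pow_right₀ hR1 (by omega))
    · exact le_max_of_le_left (pow_le_one₀ hR.le hR1.le)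
  calc |y α| ≤ R ^ s * y 0 := habs
    _ ≤ max 1 (R ^ (2 * k)) * y 0 := mul_le_mul_of_nonneg_right hfinal hy0
    _ = y 0 * max 1 (R ^ (2 * k)) := mul_comm _ _
end
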